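/- For a ≡ 1 or 2 mod 3, the polynomial f_a(x) = -8a x^3 - (8a+2) x^2 + (4a-1) x + a has no rational roots. -/

import Mathlib

open Polynomial

theorem stmt_19 (a : ℤ) (h : a % 3 = 1 ∨ a % 3 = 2) (r : ℚ) :
    aeval r (C (-8*a) * X^3 - C (8*a+2) * X^2 + C (4*a-1) * X + C a : Polynomial ℤ) ≠ 0 := by
  intro hzero
  simp only [map_add, map_sub, map_mul, map_pow, aeval_C, aeval_X] at hzero
  push_cast at hzero
  set p : ℤ := r.num with hp
  have hq : (r.den : ℚ) ≠ 0 := by exact_mod_cast r.den_nz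
  have hr : (r : ℚ) = (p : ℚ) / (r.den : ℚ) := by exact_mod_cast (Rat.num_div_den r).symm
  rw [hr] at hzero
  field_simp at hzero
  have keyQ : (((-8*a) * p^3 - (8*a+2) * p^2 * (r.den:ℤ) + (4*a-1) * p * (r.den:ℤ)^2
      + a * (r.den:ℤ)^3 : ℤ) : ℚ) * (r.den : ℚ)^3 = 0 := by
    simp only [eq_intCast] at hzero
    push_cast at hzero ⊢
    linear_combination (r.den : ℚ)^3 * hzero
  have keyZ : ((-8*a) * p^3 - (8*a+2) * p^2 * (r.den:ℤ) + (4*a-1) * p * (r.den:ℤ)^2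
      + a * (r.den:ℤ)^3) * (r.den:ℤ)^3 = 0 := by exact_mod_cast keyQ
  have hd : ((r.den:ℤ))^3 ≠ 0 := pow_ne_zero _ (by exact_mod_cast r.den_nz)
  have key : (-8*a) * p^3 - (8*a+2) * p^2 * (r.den:ℤ) + (4*a-1) * p * (r.den:ℤ)^2
      + a * (r.den:ℤ)^3 = 0 := by
    rcases mul_eq_zero.mp keyZ with h' | h'
    · exact h'
    · exact absurd h' hd
  -- move to ZMod 3
  have key3 : ((-8*a : ℤ) : ZMod 3) * (p : ZMod 3)^3
      - ((8*a+2 : ℤ) : ZMod 3) * (p : ZMod 3)^2 * ((r.den:ℤ) : ZMod 3)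
      + ((4*a-1 : ℤ) : ZMod 3) * (p : ZMod 3) * ((r.den:ℤ) : ZMod 3)^2
      + ((a : ℤ) : ZMod 3) * ((r.den:ℤ) : ZMod 3)^3 = 0 := by
    have := congrArg (fun z : ℤ => (z : ZMod 3)) key
    push_cast at this ⊢
    linear_combination this
  have hA : ((a : ℤ) : ZMod 3) = 1 ∨ ((a : ℤ) : ZMod 3) = 2 := by
    rcases h with h | h
    · left; obtain ⟨k, rfl⟩ : ∃ k, a = 3*k+1 := ⟨a/3, by omega⟩; push_cast
      rw [show (3 : ZMod 3) = 0 by decide]; ring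
    · right; obtain ⟨k, rfl⟩ : ∃ k, a = 3*k+2 := ⟨a/3, by omega⟩; push_cast
      rw [show (3 : ZMod 3) = 0 by decide]; ring
  have hcop : ¬ ((p : ZMod 3) = 0 ∧ ((r.den:ℤ) : ZMod 3) = 0) := by
    rintro ⟨h1, h2⟩
    rw [ZMod.intCast_zmod_eq_zero_iff_dvd] at h1 h2
    have h1' : (3:ℕ) ∣ p.natAbs := by simpa using Int.natAbs_dvd_natAbs.mpr h1
    have h2' : (3:ℕ) ∣ r.den := by exact_mod_cast h2
    have : Nat.Coprime 3 3 := (r.reduced.coprime_dvd_left h1').coprime_dvd_right h2'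
    exact absurd this (by decide)
  revert key3
  generalize (p : ZMod 3) = P at hcop
  generalize ((r.den:ℤ) : ZMod 3) = Q at hcop
  push_cast
  rcases hA with hA | hA <;> rw [hA] <;> revert hcop <;> revert P Q <;> decide
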